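/- Let S be a real symmetric 3×3 matrix with trace(S) = 0 and eigenvalues λ₁, λ₂, λ₃ (with multiplicity). Then (trace(S²))³ = 6·(trace(S³))² holds if and only if at least two of the eigenvalues λ₁, λ₂, λ₃ coincide. -/
import Mathlib

open Polynomial

private theorem seg_tracepow (U V D : Matrix (Fin 3) (Fin 3) ℝ)
    (huv : U * V = 1) (hvu : V * U = 1) (k : ℕ) :
    Matrix.trace ((U * D * V) ^ k) = Matrix.trace (D ^ k) := by
  have hpow : (U * D * V) ^ k = U * D ^ k * V := by
    induction k with
    | zero => simpa using huv.symm
    | succ n ih =>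
      rw [pow_succ, pow_succ, ih,
        show (U * D ^ n * V) * (U * D * V) = U * D ^ n * (V * U) * D * V by noncomm_ring,
        hvu]
      noncomm_ring
  rw [hpow, Matrix.trace_mul_cycle, hvu, one_mul]

private theorem seg_charpolyconj (U V D : Matrix (Fin 3) (Fin 3) ℝ)
    (huv : U * V = 1) :
    (U * D * V).charpoly = D.charpoly := by
  have hscal : ∀ A : Matrix (Fin 3) (Fin 3) ℝ[X],
      Matrix.scalar (Fin 3) (X : ℝ[X]) * A = A * Matrix.scalar (Fin 3) (X : ℝ[X]) :=
    fun A => (Matrix.scalar_commute (X : ℝ[X]) (fun r => Commute.all _ _) A).eq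
  have hc : Matrix.charmatrix (U * D * V)
      = ((C : ℝ →+* ℝ[X]).mapMatrix U) * Matrix.charmatrix D * ((C : ℝ →+* ℝ[X]).mapMatrix V) := by
    rw [Matrix.charmatrix, Matrix.charmatrix, mul_sub, sub_mul]
    congr 1
    · rw [← hscal, mul_assoc, ← _root_.map_mul, huv]
      simp
    · rw [← _root_.map_mul, ← _root_.map_mul]
  rw [Matrix.charpoly, Matrix.charpoly, hc, Matrix.det_mul_right_comm, ← _root_.map_mul, huv]
  simp

private theorem seg_charpolydiag (d : Fin 3 → ℝ) :
    (Matrix.diagonal d).charpoly = ∏ i, (X - C (d i)) := by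
  rw [Matrix.charpoly, Matrix.charmatrix]
  have : Matrix.scalar (Fin 3) (X : ℝ[X]) - (C : ℝ →+* ℝ[X]).mapMatrix (Matrix.diagonal d)
      = Matrix.diagonal (fun i => X - C (d i)) := by
    rw [Matrix.scalar_apply, RingHom.mapMatrix_apply, Matrix.diagonal_map (by simp),
      Matrix.diagonal_sub]
  rw [this, Matrix.det_diagonal]

private theorem seg_key (a b c : ℝ) (h : a + b + c = 0) :
    (a^2+b^2+c^2)^3 - 6*(a^3+b^3+c^3)^2 = 2*((a-b)*(b-c)*(c-a))^2 := by
  have hc : c = -a - b := by linarith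
  subst hc; ring

/-- For a real symmetric traceless 3×3 matrix `S` with eigenvalues `λ 0, λ 1, λ 2`
(with multiplicity, i.e. the characteristic polynomial factors as `∏ (X - λ i)`),
the identity `(trace S²)³ = 6·(trace S³)²` holds iff two eigenvalues coincide. -/
theorem segre_degeneracy_criterion (S : Matrix (Fin 3) (Fin 3) ℝ) (lam : Fin 3 → ℝ)
    (hsymm : S.IsSymm) (htr : Matrix.trace S = 0)
    (heig : S.charpoly = ∏ i : Fin 3, (X - C (lam i))) :
    (Matrix.trace (S ^ 2)) ^ 3 = 6 * (Matrix.trace (S ^ 3)) ^ 2 ↔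
      ∃ i j : Fin 3, i ≠ j ∧ lam i = lam j := by
  classical
  have hA : S.IsHermitian := by
    rwa [Matrix.IsHermitian, Matrix.conjTranspose_eq_transpose_of_trivial]
  set μ : Fin 3 → ℝ := hA.eigenvalues with hμ
  set U : Matrix (Fin 3) (Fin 3) ℝ := (hA.eigenvectorUnitary : Matrix (Fin 3) (Fin 3) ℝ) with hU
  have huv : U * star U = 1 :=
    (Matrix.mem_unitaryGroup_iff).mp hA.eigenvectorUnitary.2
  have hvu : star U * U = 1 := Matrix.UnitaryGroup.star_mul_self hA.eigenvectorUnitary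
  have hspec : S = U * Matrix.diagonal μ * star U := by simpa using hA.spectral_theorem
  -- trace of powers
  have htrpow : ∀ k : ℕ, Matrix.trace (S ^ k) = ∑ i, μ i ^ k := by
    intro k
    rw [hspec, seg_tracepow U (star U) _ huv hvu, Matrix.diagonal_pow, Matrix.trace_diagonal]
    simp
  -- charpoly equality
  have hcp : (∏ i : Fin 3, (X - C (μ i))) = ∏ i : Fin 3, (X - C (lam i)) := by
    rw [← seg_charpolydiag μ, ← heig, hspec, seg_charpolyconj U (star U) _ huv]
  -- multiset of roots equality
  have hms : (Finset.univ.val.map μ) = (Finset.univ.val.map lam) := by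
    have h1 : ∀ f : Fin 3 → ℝ, (∏ i : Fin 3, (X - C (f i)))
        = (Multiset.map (fun a : ℝ => X - C a) (Finset.univ.val.map f)).prod := by
      intro f; rw [Multiset.map_map]; rfl
    have := congrArg Polynomial.roots hcp
    rwa [h1 μ, h1 lam, Polynomial.roots_multiset_prod_X_sub_C,
      Polynomial.roots_multiset_prod_X_sub_C] at this
  have hsum : ∀ k : ℕ, ∑ i, lam i ^ k = ∑ i, μ i ^ k := by
    intro k
    have h2 : ∀ f : Fin 3 → ℝ, ∑ i, f i ^ k
        = ((Finset.univ.val.map f).map (fun a : ℝ => a ^ k)).sum := by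
      intro f; rw [Multiset.map_map]; rfl
    rw [h2, h2, hms]
  have ht1 : lam 0 + lam 1 + lam 2 = 0 := by
    have := hsum 1
    simp only [pow_one] at this
    rw [Fin.sum_univ_three] at this
    have h0 : Matrix.trace S = ∑ i, μ i := by
      have := htrpow 1; simpa using this
    rw [← h0, htr] at this
    linarith [this]
  have ht2 : Matrix.trace (S ^ 2) = lam 0 ^ 2 + lam 1 ^ 2 + lam 2 ^ 2 := by
    rw [htrpow 2, ← hsum 2, Fin.sum_univ_three]
  have ht3 : Matrix.trace (S ^ 3) = lam 0 ^ 3 + lam 1 ^ 3 + lam 2 ^ 3 := by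
    rw [htrpow 3, ← hsum 3, Fin.sum_univ_three]
  rw [ht2, ht3]
  have hkey := seg_key (lam 0) (lam 1) (lam 2) ht1
  constructor
  · intro hEq
    have hprod : (lam 0 - lam 1) * (lam 1 - lam 2) * (lam 2 - lam 0) = 0 := by
      have hsq : ((lam 0 - lam 1) * (lam 1 - lam 2) * (lam 2 - lam 0)) ^ 2 = 0 := by
        nlinarith [hkey]
      exact pow_eq_zero_iff (by norm_num) |>.mp hsq
    rcases mul_eq_zero.mp hprod with h | h
    · rcases mul_eq_zero.mp h with h | h
      · exact ⟨0, 1, by decide, by linarith⟩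
      · exact ⟨1, 2, by decide, by linarith⟩
    · exact ⟨2, 0, by decide, by linarith⟩
  · rintro ⟨i, j, hij, hval⟩
    have hz : (lam 0 - lam 1) * (lam 1 - lam 2) * (lam 2 - lam 0) = 0 := by
      have h3 : ∀ i : Fin 3, i = 0 ∨ i = 1 ∨ i = 2 := by decide
      rcases h3 i with rfl | rfl | rfl <;> rcases h3 j with rfl | rfl | rfl <;>
        first
        | exact absurd rfl hij
        | (rw [hval]; ring)
    rw [hz] at hkey
    norm_num at hkey
    linarith
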